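/- There exist a constant α > 0 and an infinite family of strings such that for each string T of length n in the family (over an alphabet whose size grows with n), every LZ-like encoding of T whose underlying parsing is the greedy LZ77 parsing has height at least α·n; that is, the height of the LZ77 encoding can be Θ(n). -/

import Mathlib

variable {α : Type*}

/-- The substring `T[i..i+ℓ)` (0-indexed). -/
def sub (T : List α) (i ℓ : ℕ) : List α := (T.drop i).take ℓ

/-- `p` is a period of `w`: `0 < p ≤ |w|` and `w[i] = w[i+p]` whenever both sides exist. -/
def IsPeriod (w : List α) (p : ℕ) : Prop :=
  0 < p ∧ p ≤ w.length ∧ ∀ i, i + p < w.length → w[i]? = w[i + p]?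

/-- The minimum period of `w`. -/
noncomputable def minPeriod (w : List α) : ℕ := sInf {p | IsPeriod w p}

/-- Starting position (0-indexed) of the `j`-th phrase (0-indexed) of a parsing,
the parsing being given as a list of (length, source) pairs. -/
def startOf (P : List (ℕ × ℕ)) (j : ℕ) : ℕ := ((P.take j).map Prod.fst).sum

/-- Length of the `j`-th phrase. -/
def lenOf (P : List (ℕ × ℕ)) (j : ℕ) : ℕ := (P[j]?.map Prod.fst).getD 0

/-- Source of the `j`-th phrase. -/
def srcOf (P : List (ℕ × ℕ)) (j : ℕ) : ℕ := (P[j]?.map Prod.snd).getD 0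

/-- `P` is an LZ-like encoding of `T`: phrases have positive length, cover `T`,
and every phrase of length at least 2 has a source strictly before its start with a
matching (possibly overlapping) previous occurrence. (Length-1 phrases are literal
symbols; the symbol is determined by `T`, so it need not be stored.) -/
def IsLZ (T : List α) (P : List (ℕ × ℕ)) : Prop :=
  (∀ q ∈ P, 1 ≤ q.1) ∧ (P.map Prod.fst).sum = T.length ∧
  ∀ j < P.length, 2 ≤ lenOf P j →
    srcOf P j < startOf P j ∧
    sub T (srcOf P j) (lenOf P j) = sub T (startOf P j) (lenOf P j)

/-- `H` is the height function of the LZ-like encoding `P`: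
`H i = 0` on length-1 phrases, and otherwise
`H i = H (s_j + (i - b_j) % (b_j - s_j)) + 1` for position `i` of phrase `j`. -/
def IsHeight (P : List (ℕ × ℕ)) (H : ℕ → ℕ) : Prop :=
  ∀ j < P.length, ∀ i, startOf P j ≤ i → i < startOf P j + lenOf P j →
    (lenOf P j = 1 → H i = 0) ∧
    (2 ≤ lenOf P j →
      H i = H (srcOf P j + (i - startOf P j) % (startOf P j - srcOf P j)) + 1)

/-- The LZ-like encoding `P` of `T` is `h`-bounded. -/
def HBounded (T : List α) (P : List (ℕ × ℕ)) (h : ℕ) : Prop :=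
  ∃ H : ℕ → ℕ, IsHeight P H ∧ ∀ i < T.length, H i ≤ h

/-- `z^h(T)`: minimum size of an `h`-bounded LZ-like encoding of `T`. -/
noncomputable def zh (T : List α) (h : ℕ) : ℕ :=
  sInf {k | ∃ P : List (ℕ × ℕ), IsLZ T P ∧ HBounded T P h ∧ P.length = k}

/-- `lpf_T(b)`: length of the longest previous factor at position `b` (0-indexed). -/
noncomputable def lpf (T : List α) (b : ℕ) : ℕ :=
  sSup {l | b + l ≤ T.length ∧ ∃ s < b, sub T s l = sub T b l}

/-- Number of phrases of the greedy LZ77 parsing of `T[b..)`;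
`lzCount T 0 = z(T)` is the size of the greedy LZ77 parsing of `T`. -/
noncomputable def lzCount (T : List α) (b : ℕ) : ℕ :=
  if hb : b < T.length then lzCount T (b + max 1 (lpf T b)) + 1 else 0
termination_by T.length - b
decreasing_by
  have h1 : 1 ≤ max 1 (lpf T b) := le_max_left _ _
  omega

/-- Starting positions of the phrases of the greedy LZ77 parsing of `T` (from `b`). -/
noncomputable def lzStarts (T : List α) (b : ℕ) : List ℕ :=
  if hb : b < T.length then b :: lzStarts T (b + max 1 (lpf T b)) else []
termination_by T.length - b
decreasing_by
  have h1 : 1 ≤ max 1 (lpf T b) := le_max_left _ _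
  omega

/-- letter at position p of the hard string -/
def ff (p : ℕ) : ℕ := if p % 5 = 0 ∨ p % 5 = 2 then 0 else (p+4)/5

/-- the hard string of m+1 blocks, length 5m+6 -/
def Tm (m : ℕ) : List ℕ := (List.range (5*m+6)).map ff

lemma Tm_length (m : ℕ) : (Tm m).length = 5*m+6 := by simp [Tm]

lemma Tm_get (m i : ℕ) (h : i < 5*m+6) : (Tm m)[i]? = some (ff i) := by
  simp [Tm, List.getElem?_range, h]

lemma sub_get (T : List α) (i ℓ j : ℕ) :
    (sub T i ℓ)[j]? = if j < ℓ then T[i+j]? else none := by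
  simp [sub, List.getElem?_take, List.getElem?_drop]

lemma subEq (m s b ℓ : ℕ) (hs : s + ℓ ≤ 5*m+6) (hb : b + ℓ ≤ 5*m+6)
    (h : sub (Tm m) s ℓ = sub (Tm m) b ℓ) : ∀ j < ℓ, ff (s+j) = ff (b+j) := by
  intro j hj
  have := congrArg (fun l => l[j]?) h
  simp only [sub_get, if_pos hj] at this
  rw [Tm_get m (s+j) (by omega), Tm_get m (b+j) (by omega)] at this
  exact Option.some_injective _ this

lemma sub_eq_of_ff (m s b ℓ : ℕ) (hs : s + ℓ ≤ 5*m+6) (hb : b + ℓ ≤ 5*m+6)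
    (h : ∀ j < ℓ, ff (s+j) = ff (b+j)) : sub (Tm m) s ℓ = sub (Tm m) b ℓ := by
  apply List.ext_getElem?
  intro j
  rw [sub_get, sub_get]
  split_ifs with hj
  · rw [Tm_get m (s+j) (by omega), Tm_get m (b+j) (by omega), h j hj]
  · rfl

-- ff facts
lemma ff_5q0 (q : ℕ) : ff (5*q) = 0 := by unfold ff; split_ifs with h <;> omega
lemma ff_5q1 (q : ℕ) : ff (5*q+1) = q+1 := by unfold ff; split_ifs with h <;> omega
lemma ff_5q2 (q : ℕ) : ff (5*q+2) = 0 := by unfold ff; split_ifs with h <;> omega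
lemma ff_5q3 (q : ℕ) : ff (5*q+3) = q+1 := by unfold ff; split_ifs with h <;> omega
lemma ff_5q4 (q : ℕ) : ff (5*q+4) = q+1 := by unfold ff; split_ifs with h <;> omega

/-- positions where letter k+1 occurs -/
lemma ff_eq_pos (s k : ℕ) (h : ff s = k+1) : s = 5*k+1 ∨ s = 5*k+3 ∨ s = 5*k+4 := by
  unfold ff at h; split_ifs at h with hc <;> omega

lemma ff_eq_zero (s : ℕ) (h : ff s = 0) : s % 5 = 0 ∨ s % 5 = 2 := by
  unfold ff at h; split_ifs at h with hc <;> omega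

lemma sSup_eq_of (S : Set ℕ) (v : ℕ) (h1 : v ∈ S) (h2 : ∀ l ∈ S, l ≤ v) : sSup S = v :=
  le_antisymm (csSup_le ⟨v, h1⟩ h2) (le_csSup ⟨v, h2⟩ h1)

lemma lpf_zero (m : ℕ) : lpf (Tm m) 0 = 0 := by
  unfold lpf
  refine Eq.trans (congrArg sSup (?_ : _ = (∅ : Set ℕ))) (csSup_empty (α := ℕ))
  ext l; simp only [Set.mem_empty_iff_false, iff_false, Set.mem_setOf_eq]
  rintro ⟨-, s, hs, -⟩; omega

lemma lpf_5q1 (m q : ℕ) (hq : q ≤ m) : lpf (Tm m) (5*q+1) = 0 := by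
  unfold lpf
  apply sSup_eq_of
  · refine ⟨by rw [Tm_length]; omega, 0, by omega, rfl⟩
  · rintro l ⟨hl, s, hs, hsub⟩
    by_contra hc
    have h0 := subEq m s (5*q+1) l (by rw [Tm_length] at hl; omega) (by rwa [Tm_length] at hl)
      hsub 0 (by omega)
    rw [Nat.add_zero, Nat.add_zero, ff_5q1] at h0
    have := ff_eq_pos s q h0
    omega

lemma lpf_5q2 (m q : ℕ) (hq : q ≤ m) : lpf (Tm m) (5*q+2) = 2 := by
  unfold lpf
  apply sSup_eq_of
  · refine ⟨by rw [Tm_length]; omega, 5*q, by omega, ?_⟩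
    apply sub_eq_of_ff m _ _ 2 (by omega) (by omega)
    intro j hj
    interval_cases j
    · rw [Nat.add_zero, Nat.add_zero, ff_5q0, ff_5q2]
    · rw [show 5*q+1 = 5*q+1 from rfl, ff_5q1, show 5*q+2+1 = 5*q+3 from rfl, ff_5q3]
  · rintro l ⟨hl, s, hs, hsub⟩
    rw [Tm_length] at hl
    by_contra hc
    push_neg at hc
    have hE := subEq m s (5*q+2) l (by omega) (by omega) hsub
    have h1 := hE 1 (by omega)
    have h2 := hE 2 (by omega)
    rw [show 5*q+2+1 = 5*q+3 from rfl, ff_5q3] at h1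
    rw [show 5*q+2+2 = 5*q+4 from rfl, ff_5q4] at h2
    have e1 := ff_eq_pos _ q h1
    have e2 := ff_eq_pos _ q h2
    omega

lemma lpf_5q4 (m q : ℕ) (hq : q ≤ m) : lpf (Tm m) (5*q+4) = 2 := by
  unfold lpf
  apply sSup_eq_of
  · refine ⟨by rw [Tm_length]; omega, 5*q+1, by omega, ?_⟩
    apply sub_eq_of_ff m _ _ 2 (by omega) (by omega)
    intro j hj
    interval_cases j
    · rw [Nat.add_zero, Nat.add_zero, ff_5q1, ff_5q4]
    · rw [show 5*q+1+1 = 5*q+2 from rfl, ff_5q2, show 5*q+4+1 = 5*(q+1) from rfl, ff_5q0]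
  · rintro l ⟨hl, s, hs, hsub⟩
    rw [Tm_length] at hl
    by_contra hc
    push_neg at hc
    have hql : 5*q + 7 ≤ 5*m+6 := by omega
    have hqm : q < m := by omega
    have hE := subEq m s (5*q+4) l (by omega) (by omega) hsub
    have h0 := hE 0 (by omega)
    have h1 := hE 1 (by omega)
    have h2 := hE 2 (by omega)
    rw [Nat.add_zero, Nat.add_zero, ff_5q4] at h0
    rw [show 5*q+4+1 = 5*(q+1) from rfl, ff_5q0] at h1
    rw [show 5*q+4+2 = 5*(q+1)+1 from rfl, ff_5q1] at h2
    have e0 := ff_eq_pos _ q h0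
    have e2 := ff_eq_pos _ (q+1) h2
    -- also need info from h1 : ff (s+1) = 0
    have e1 := ff_eq_zero _ h1
    omega

def sAux : ℕ → ℕ → List ℕ
  | 0, _ => []
  | j+1, q => (5*q+1) :: (5*q+2) :: (5*q+4) :: sAux j (q+1)

lemma lz_tail (m : ℕ) : ∀ j q, j + q = m + 1 → lzStarts (Tm m) (5*q+1) = sAux j q := by
  intro j
  induction j with
  | zero =>
      intro q hq
      rw [lzStarts, dif_neg]
      · rfl
      · rw [Tm_length]; omega
  | succ j ih =>
      intro q hq
      rw [lzStarts, dif_pos (by rw [Tm_length]; omega), lpf_5q1 m q (by omega)]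
      rw [show 5*q+1 + max 1 0 = 5*q+2 by omega]
      rw [lzStarts, dif_pos (by rw [Tm_length]; omega), lpf_5q2 m q (by omega)]
      rw [show 5*q+2 + max 1 2 = 5*q+4 by omega]
      rw [lzStarts, dif_pos (by rw [Tm_length]; omega), lpf_5q4 m q (by omega)]
      rw [show 5*q+4 + max 1 2 = 5*(q+1)+1 by omega]
      rw [ih (q+1) (by omega)]
      rfl

lemma lz_main (m : ℕ) : lzStarts (Tm m) 0 = 0 :: sAux (m+1) 0 := by
  rw [lzStarts, dif_pos (by rw [Tm_length]; omega), lpf_zero]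
  rw [show 0 + max 1 0 = 5*0+1 by omega, lz_tail m (m+1) 0 (by omega)]

lemma sAux_length : ∀ j q, (sAux j q).length = 3*j := by
  intro j
  induction j with
  | zero => intro q; rfl
  | succ j ih => intro q; simp [sAux, ih]; omega

/-- value at index i of sAux _ q -/
def sVal (q i : ℕ) : ℕ := 5*(q + i/3) + (if i % 3 = 0 then 1 else if i % 3 = 1 then 2 else 4)

lemma sAux_get : ∀ j q i, i < 3*j → (sAux j q)[i]? = some (sVal q i) := by
  intro j
  induction j with
  | zero => intro q i h; omega
  | succ j ih =>
      intro q i h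
      match i with
      | 0 => rfl
      | 1 => rfl
      | 2 => simp [sAux, sVal]
      | (i+3) =>
          have : (sAux (j+1) q)[i+3]? = (sAux j (q+1))[i]? := by
            simp [sAux]
          rw [this, ih (q+1) i (by omega)]
          congr 1
          unfold sVal
          have h3 : (i+3)/3 = i/3 + 1 := by omega
          have h4 : (i+3) % 3 = i % 3 := by omega
          rw [h3, h4]
          ring_nf

lemma startOf_succ (P : List (ℕ × ℕ)) (j : ℕ) (hj : j < P.length) :
    startOf P (j+1) = startOf P j + lenOf P j := by
  unfold startOf lenOf
  rw [← List.take_concat_get hj, List.concat_eq_append, List.map_append, List.sum_append]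
  simp [List.getElem?_eq_getElem hj]

lemma startOf_total (P : List (ℕ × ℕ)) : startOf P P.length = (P.map Prod.fst).sum := by
  unfold startOf; rw [List.take_length]

lemma sVal_30 (q : ℕ) : sVal 0 (3*q) = 5*q+1 := by unfold sVal; split_ifs <;> omega
lemma sVal_31 (q : ℕ) : sVal 0 (3*q+1) = 5*q+2 := by unfold sVal; split_ifs <;> omega
lemma sVal_32 (q : ℕ) : sVal 0 (3*q+2) = 5*q+4 := by unfold sVal; split_ifs <;> omega

theorem main (m : ℕ) (P : List (ℕ × ℕ)) (hlz : IsLZ (Tm m) P)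
    (hP : (List.range P.length).map (startOf P) = lzStarts (Tm m) 0)
    (H : ℕ → ℕ) (hH : IsHeight P H) : H (5*(m+1)) = 2*(m+1) := by
  rw [lz_main] at hP
  have hPlen : P.length = 3*m+4 := by
    have := congrArg List.length hP
    simp [sAux_length] at this
    omega
  have hstart : ∀ i, i + 1 < P.length → startOf P (i+1) = sVal 0 i := by
    intro i hi
    have := congrArg (fun l => l[i+1]?) hP
    simp only [List.getElem?_map, List.getElem?_range, hi, if_pos] at this
    rw [List.getElem?_cons_succ, sAux_get (m+1) 0 i (by omega)] at this
    simpa using this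
  have hstart0 : startOf P 0 = 0 := rfl
  have hstartL : startOf P (3*m+4) = 5*m+6 := by
    rw [← hPlen, startOf_total, hlz.2.1, Tm_length]
  -- start values at the phrases we care about
  have hs1 : ∀ q ≤ m, startOf P (3*q+1) = 5*q+1 := fun q hq => by
    rw [hstart (3*q) (by omega)]; exact sVal_30 q
  have hs2 : ∀ q ≤ m, startOf P (3*q+2) = 5*q+2 := fun q hq => by
    rw [show (3*q+2) = (3*q+1)+1 from rfl, hstart (3*q+1) (by omega), sVal_31]
  have hs3 : ∀ q ≤ m, startOf P (3*q+3) = 5*q+4 := fun q hq => by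
    rw [show (3*q+3) = (3*q+2)+1 from rfl, hstart (3*q+2) (by omega), sVal_32]
  have hs4 : ∀ q ≤ m, startOf P (3*q+4) = 5*q+6 := by
    intro q hq
    rcases eq_or_lt_of_le hq with rfl | hq'
    · exact hstartL
    · rw [show (3*q+4) = (3*(q+1))+1 from rfl, hstart (3*(q+1)) (by omega), sVal_30]; omega
  have hlen0 : lenOf P 0 = 1 := by
    have := startOf_succ P 0 (by omega)
    rw [hstart0] at this
    rw [show (1:ℕ) = 0+1 from rfl, hstart 0 (by omega)] at this
    simpa [sVal] using this.symm
  have hlen2 : ∀ q ≤ m, lenOf P (3*q+2) = 2 := by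
    intro q hq
    have := startOf_succ P (3*q+2) (by omega)
    rw [hs2 q hq, show (3*q+2)+1 = 3*q+3 from rfl, hs3 q hq] at this
    omega
  have hlen3 : ∀ q ≤ m, lenOf P (3*q+3) = 2 := by
    intro q hq
    have := startOf_succ P (3*q+3) (by omega)
    rw [hs3 q hq, show (3*q+3)+1 = 3*q+4 from rfl, hs4 q hq] at this
    omega
  -- forced sources
  have hsrc2 : ∀ q ≤ m, srcOf P (3*q+2) = 5*q := by
    intro q hq
    obtain ⟨hlt, hsub⟩ := hlz.2.2 (3*q+2) (by omega) (by rw [hlen2 q hq])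
    rw [hlen2 q hq] at hsub
    rw [hs2 q hq] at hlt hsub
    have hE := subEq m _ _ 2 (by omega) (by omega) hsub
    have h0 := hE 0 (by omega)
    have h1 := hE 1 (by omega)
    rw [Nat.add_zero, show 5*q+2+0 = 5*q+2 from rfl, ff_5q2] at h0
    rw [show 5*q+2+1 = 5*q+3 from rfl, ff_5q3] at h1
    have e0 := ff_eq_zero _ h0
    have e1 := ff_eq_pos _ q h1
    omega
  have hsrc3 : ∀ q ≤ m, srcOf P (3*q+3) = 5*q+1 := by
    intro q hq
    obtain ⟨hlt, hsub⟩ := hlz.2.2 (3*q+3) (by omega) (by rw [hlen3 q hq])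
    rw [hlen3 q hq] at hsub
    rw [hs3 q hq] at hlt hsub
    have hE := subEq m _ _ 2 (by omega) (by omega) hsub
    have h0 := hE 0 (by omega)
    have h1 := hE 1 (by omega)
    rw [Nat.add_zero, show 5*q+4+0 = 5*q+4 from rfl, ff_5q4] at h0
    rw [show 5*q+4+1 = 5*(q+1) from rfl, ff_5q0] at h1
    have e0 := ff_eq_pos _ q h0
    have e1 := ff_eq_zero _ h1
    omega
  -- heights
  have hH0 : H 0 = 0 := by
    have := (hH 0 (by omega) 0 (by rw [hstart0]) (by rw [hstart0, hlen0]; omega)).1 hlen0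
    exact this
  have hblock : ∀ q ≤ m, H (5*q+5) = H (5*q) + 2 := by
    intro q hq
    -- phrase 3q+2 : positions 5q+2, 5q+3, src 5q, dist 2
    have hA := (hH (3*q+2) (by omega) (5*q+2) (by rw [hs2 q hq]) (by rw [hs2 q hq, hlen2 q hq]; omega)).2
      (by rw [hlen2 q hq])
    have hB := (hH (3*q+2) (by omega) (5*q+3) (by rw [hs2 q hq]; omega) (by rw [hs2 q hq, hlen2 q hq]; omega)).2
      (by rw [hlen2 q hq])
    rw [hs2 q hq, hsrc2 q hq] at hA hB
    rw [show 5*q+2 - 5*q = 2 by omega] at hA hB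
    rw [show 5*q + (5*q+2 - (5*q+2)) % 2 = 5*q by omega] at hA
    rw [show 5*q + (5*q+3 - (5*q+2)) % 2 = 5*q+1 by omega] at hB
    -- phrase 3q+3 : positions 5q+4, 5q+5, src 5q+1, dist 3
    have hC := (hH (3*q+3) (by omega) (5*q+5) (by rw [hs3 q hq]; omega) (by rw [hs3 q hq, hlen3 q hq]; omega)).2
      (by rw [hlen3 q hq])
    rw [hs3 q hq, hsrc3 q hq] at hC
    rw [show 5*q+4 - (5*q+1) = 3 by omega] at hC
    rw [show 5*q+1 + (5*q+5 - (5*q+4)) % 3 = 5*q+2 by omega] at hC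
    omega
  have hind : ∀ q ≤ m+1, H (5*q) = 2*q := by
    intro q
    induction q with
    | zero => intro _; simpa using hH0
    | succ q ih =>
        intro hq
        have := hblock q (by omega)
        have h5 : 5*(q+1) = 5*q+5 := by ring
        rw [h5, this, ih (by omega)]
        ring
  exact hind (m+1) le_rfl



/-- The height of the LZ77 encoding can be `Θ(n)`: there are a constant `a > 0`
and an infinite family of strings (over a growing alphabet, here `ℕ`), of lengths
tending to infinity, such that every LZ-like encoding whose underlying parsing is
the greedy LZ77 parsing has height at least `a · n`. -/
theorem stmt17 :
    ∃ a : ℝ, 0 < a ∧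
      ∃ T : ℕ → List ℕ,
        Filter.Tendsto (fun m => (T m).length) Filter.atTop Filter.atTop ∧
        ∀ m : ℕ, ∀ P : List (ℕ × ℕ), IsLZ (T m) P →
          (List.range P.length).map (startOf P) = lzStarts (T m) 0 →
          ∀ H : ℕ → ℕ, IsHeight P H →
            ∃ i < (T m).length, a * (T m).length ≤ (H i : ℝ) := by
  refine ⟨1/3, by norm_num, Tm, ?_, ?_⟩
  · simp only [Tm_length]
    exact Filter.tendsto_atTop_atTop.mpr fun b => ⟨b, fun a ha => by omega⟩
  · intro m P hlz hP H hH
    have hmain := main m P hlz hP H hH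
    refine ⟨5*(m+1), by rw [Tm_length]; omega, ?_⟩
    rw [hmain, Tm_length]
    have hm : (0:ℝ) ≤ (m:ℝ) := Nat.cast_nonneg m
    push_cast
    linarith
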